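/- Let p be an odd prime and write p = 2q+1. Then the sum over integers i from q+1 to p−1 of ⌊ i·(p²−p+1)/p ⌋ − ⌊ i·(p²−p+1)/p − (1 − 1/p)·(q+1)·(p²−p+1)/p ⌋, where the floors are floors of rational numbers, equals p·(p−1)²/4; equivalently, 4 times the sum equals p·(p−1)². -/

import Mathlib

/-- Proposition 2.17: the Booher–Cais lower bound sum equals `p(p−1)²/4`;
equivalently, 4 times the sum equals `p(p−1)²`. -/
theorem lower_bound_sum
    (p q : ℕ) (hp : p.Prime) (hpq : p = 2 * q + 1) :
    4 * (∑ i ∈ Finset.Icc (q + 1) (p - 1),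
      (⌊(i : ℚ) * ((p : ℚ) ^ 2 - p + 1) / p⌋
        - ⌊(i : ℚ) * ((p : ℚ) ^ 2 - p + 1) / p
            - (1 - 1 / (p : ℚ)) * (((q : ℚ) + 1) * ((p : ℚ) ^ 2 - p + 1)) / p⌋)) =
    (p : ℤ) * ((p : ℤ) - 1) ^ 2 := by
  subst hpq
  have hq0 : (0:ℚ) < (2*q+1 : ℕ) := by positivity
  have key : ∀ i ∈ Finset.Icc (q+1) (2*q+1-1),
      (⌊(i : ℚ) * (((2*q+1:ℕ) : ℚ) ^ 2 - ((2*q+1:ℕ):ℚ) + 1) / ((2*q+1:ℕ):ℚ)⌋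
        - ⌊(i : ℚ) * (((2*q+1:ℕ) : ℚ) ^ 2 - ((2*q+1:ℕ):ℚ) + 1) / ((2*q+1:ℕ):ℚ)
            - (1 - 1 / ((2*q+1:ℕ) : ℚ)) * (((q : ℚ) + 1) * (((2*q+1:ℕ) : ℚ) ^ 2 - ((2*q+1:ℕ):ℚ) + 1)) / ((2*q+1:ℕ):ℚ)⌋)
      = ((2*q+1 : ℕ) : ℤ) * q := by
    intro i hi
    simp only [Finset.mem_Icc] at hi
    obtain ⟨hi1, hi2⟩ := hi
    have hi2' : i ≤ 2*q := by omega
    have hiq1 : ((q:ℚ)+1) ≤ i := by exact_mod_cast hi1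
    have hiq2 : (i:ℚ) ≤ 2*q := by exact_mod_cast hi2'
    have hQ : ((2*q+1:ℕ):ℚ) = 2*(q:ℚ)+1 := by push_cast; ring
    have h1 : ⌊(i : ℚ) * (((2*q+1:ℕ) : ℚ) ^ 2 - ((2*q+1:ℕ):ℚ) + 1) / ((2*q+1:ℕ):ℚ)⌋
        = (i:ℤ) * (2*q) := by
      rw [Int.floor_eq_iff]
      rw [hQ]
      constructor
      · rw [le_div_iff₀ (by positivity)]
        push_cast
        nlinarith [hiq1, sq_nonneg (q:ℚ)]
      · rw [div_lt_iff₀ (by positivity)]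
        push_cast
        nlinarith [hiq2]
    have h2 : ⌊(i : ℚ) * (((2*q+1:ℕ) : ℚ) ^ 2 - ((2*q+1:ℕ):ℚ) + 1) / ((2*q+1:ℕ):ℚ)
            - (1 - 1 / ((2*q+1:ℕ) : ℚ)) * (((q : ℚ) + 1) * (((2*q+1:ℕ) : ℚ) ^ 2 - ((2*q+1:ℕ):ℚ) + 1)) / ((2*q+1:ℕ):ℚ)⌋
        = (i:ℤ) * (2*q) - (2*q+1) * q := by
      have harg : (i : ℚ) * (((2*q+1:ℕ) : ℚ) ^ 2 - ((2*q+1:ℕ):ℚ) + 1) / ((2*q+1:ℕ):ℚ)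
            - (1 - 1 / ((2*q+1:ℕ) : ℚ)) * (((q : ℚ) + 1) * (((2*q+1:ℕ) : ℚ) ^ 2 - ((2*q+1:ℕ):ℚ) + 1)) / ((2*q+1:ℕ):ℚ)
          = ((i:ℚ) * (2*q) - (2*q+1) * q) + ((i:ℚ)*(2*q+1) - q)/(2*q+1)^2 := by
        rw [hQ]
        field_simp
        ring
      rw [harg]
      have hfrac0 : (0:ℚ) ≤ ((i:ℚ)*(2*q+1) - q)/(2*q+1)^2 := by
        apply div_nonneg _ (by positivity)
        nlinarith [hiq1]
      have hfrac1 : ((i:ℚ)*(2*q+1) - q)/(2*q+1)^2 < 1 := by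
        rw [div_lt_one (by positivity)]
        nlinarith [hiq2, sq_nonneg (q:ℚ)]
      rw [Int.floor_eq_iff]
      constructor
      · push_cast
        linarith [hfrac0]
      · push_cast
        linarith [hfrac1]
    rw [h1, h2]
    push_cast
    ring
  rw [Finset.sum_congr rfl key, Finset.sum_const, Nat.card_Icc]
  have hcard : 2*q+1-1 + 1 - (q+1) = q := by omega
  rw [hcard]
  push_cast
  ring
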